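/- Let A be a finite alphabet, P_A a probability distribution on A with P_A(a) > 0 for all a ∈ A, and γ = [n_a]_{a∈A} a composition with Σ_a n_a = n ≥ 1; let Q(a) = n_a / n be its n-type. Let C ⊆ T_γ be a nonempty codebook with |C| = 2^k for a natural number k, and let P_{Ã} be the uniform distribution on C. Then (1/n) D(P_{Ã} ‖ P_A^n) = H(Q) − k/n + D(Q ‖ P_A), where D(P_{Ã} ‖ P_A^n) = Σ_{c∈C} (1/|C|) log₂( (1/|C|) / Π_{i=1}^n P_A(c_i) ), H(Q) = −Σ_{a: Q(a)>0} Q(a) log₂ Q(a), and D(Q ‖ P_A) = Σ_{a: Q(a)>0} Q(a) log₂(Q(a)/P_A(a)). -/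
import Mathlib


/-- The type class `T_γ` of sequences of length `n` with composition `γ`. -/
def typeClass {A : Type*} [Fintype A] [DecidableEq A] (n : ℕ) (γ : A → ℕ) :
    Finset (Fin n → A) :=
  Finset.univ.filter (fun c => ∀ a, (Finset.univ.filter (fun i => c i = a)).card = γ a)

/-- For a codebook `C ⊆ T_γ` with `|C| = 2^k`, carrying the uniform distribution,
    the normalized divergence decomposes as
    `(1/n) D(P_Ã ‖ P_A^n) = H(Q) − k/n + D(Q ‖ P_A)`, where `Q(a) = n_a/n`
    is the `n`-type of the composition `γ`. -/
theorem ccdm_divergence_decomposition {A : Type*} [Fintype A] [DecidableEq A]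
    (PA : A → ℝ) (hPA : ∀ a, 0 < PA a) (hPAsum : ∑ a, PA a = 1)
    (n : ℕ) (hn : 1 ≤ n) (γ : A → ℕ) (hγsum : ∑ a, γ a = n)
    (k : ℕ) (C : Finset (Fin n → A)) (hC : C ⊆ typeClass n γ)
    (hCne : C.Nonempty) (hCcard : C.card = 2 ^ k) :
    (1 / (n : ℝ)) *
        (∑ c ∈ C, (1 / (C.card : ℝ)) *
          Real.logb 2 ((1 / (C.card : ℝ)) / ∏ i : Fin n, PA (c i))) =
      (- ∑ a ∈ Finset.univ.filter (fun a => 0 < γ a),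
          ((γ a : ℝ) / n) * Real.logb 2 ((γ a : ℝ) / n)) -
        (k : ℝ) / n +
        ∑ a ∈ Finset.univ.filter (fun a => 0 < γ a),
          ((γ a : ℝ) / n) * Real.logb 2 (((γ a : ℝ) / n) / PA a) := by
  have hn0 : (0:ℝ) < n := by exact_mod_cast hn
  -- product over any codeword equals ∏ a, PA a ^ γ a
  have hprod : ∀ c ∈ C, (∏ i : Fin n, PA (c i)) = ∏ a, PA a ^ γ a := by
    intro c hc
    have hmem := hC hc
    simp only [typeClass, Finset.mem_filter, Finset.mem_univ, true_and] at hmem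
    rw [← Finset.prod_fiberwise_of_maps_to (g := c) (t := Finset.univ)
        (fun i _ => Finset.mem_univ (c i)) (fun i => PA (c i))]
    refine Finset.prod_congr rfl fun a _ => ?_
    rw [← hmem a, ← Finset.prod_const]
    exact Finset.prod_congr rfl fun i hi => by
      simp only [Finset.mem_filter] at hi; rw [hi.2]
  have hprodpos : (0:ℝ) < ∏ a, PA a ^ γ a :=
    Finset.prod_pos fun a _ => pow_pos (hPA a) _
  have hcard : (C.card : ℝ) = 2 ^ k := by rw [hCcard]; push_cast; ring
  -- the summand is constant
  have hsum : (∑ c ∈ C, (1 / (C.card : ℝ)) *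
      Real.logb 2 ((1 / (C.card : ℝ)) / ∏ i : Fin n, PA (c i))) =
      (-(k:ℝ)) - ∑ a, (γ a : ℝ) * Real.logb 2 (PA a) := by
    have hconst : ∀ c ∈ C, (1 / (C.card : ℝ)) *
        Real.logb 2 ((1 / (C.card : ℝ)) / ∏ i : Fin n, PA (c i)) =
        (1 / (C.card : ℝ)) * ((-(k:ℝ)) - ∑ a, (γ a : ℝ) * Real.logb 2 (PA a)) := by
      intro c hc
      rw [hprod c hc]
      congr 1
      rw [Real.logb_div (by positivity) (ne_of_gt hprodpos), hcard]
      rw [one_div, Real.logb_inv, Real.logb_pow, Real.logb_self_eq_one one_lt_two]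
      rw [Real.logb_prod _ _ (fun a _ => ne_of_gt (pow_pos (hPA a) _))]
      simp [Real.logb_pow]
    rw [Finset.sum_congr rfl hconst, Finset.sum_const, nsmul_eq_mul]
    have : (C.card : ℝ) ≠ 0 := by rw [hcard]; positivity
    field_simp
  rw [hsum]
  -- rewrite RHS divergence term
  have hrhs : ∀ a ∈ Finset.univ.filter (fun a => 0 < γ a),
      ((γ a : ℝ) / n) * Real.logb 2 (((γ a : ℝ) / n) / PA a) =
      ((γ a : ℝ) / n) * Real.logb 2 ((γ a : ℝ) / n)
        - ((γ a : ℝ) / n) * Real.logb 2 (PA a) := by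
    intro a ha
    simp only [Finset.mem_filter] at ha
    have hq : (0:ℝ) < (γ a : ℝ) / n := by
      have : (0:ℝ) < (γ a : ℝ) := by exact_mod_cast ha.2
      positivity
    rw [Real.logb_div (ne_of_gt hq) (ne_of_gt (hPA a)), mul_sub]
  rw [Finset.sum_congr rfl hrhs, Finset.sum_sub_distrib]
  have hfull : (∑ a ∈ Finset.univ.filter (fun a => 0 < γ a),
      ((γ a : ℝ) / n) * Real.logb 2 (PA a)) =
      ∑ a, ((γ a : ℝ) / n) * Real.logb 2 (PA a) := by
    refine Finset.sum_subset (Finset.filter_subset _ _) fun a _ ha => ?_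
    simp only [Finset.mem_filter, Finset.mem_univ, true_and, not_lt,
      Nat.le_zero] at ha
    simp [ha]
  rw [hfull]
  have : ∑ a, ((γ a : ℝ) / n) * Real.logb 2 (PA a)
      = (1 / n) * ∑ a, (γ a : ℝ) * Real.logb 2 (PA a) := by
    rw [Finset.mul_sum]; exact Finset.sum_congr rfl fun a _ => by ring
  rw [this]
  ring
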